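/- Let correctability be a downward-closed property on subsets of a finite set B of size N (subsets of correctable regions are correctable), with distance d = min{|R| : R not correctable} and price p = min{|R| : R^c correctable}. If 2 ≤ p ≤ 2d − 2, then B can be partitioned into three pairwise disjoint regions R₀, R₁, R₂ with R₀, R₁, R₂ all correctable (indeed R₀ = R^c for some R realizing the price, and R₁, R₂ a partition of R into nonempty pieces each of size ≤ d − 1). -/

import Mathlib

/-- If correctability is downward closed, with distance d and price p satisfying
2 ≤ p ≤ 2d − 2, then the physical system partitions into three pairwise
disjoint correctable regions (two of them nonempty pieces of a price-realizing
region, each of size ≤ d − 1). -/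
theorem three_correctable_regions {B : Type*} [Fintype B] [DecidableEq B]
    (correctable : Finset B → Prop)
    (hdown : ∀ {R R' : Finset B}, R' ⊆ R → correctable R → correctable R')
    (d p : ℕ)
    (hd : d = sInf {k | ∃ R : Finset B, R.card = k ∧ ¬ correctable R})
    (hp : p = sInf {k | ∃ R : Finset B, R.card = k ∧ correctable Rᶜ})
    (hdne : ∃ R : Finset B, ¬ correctable R)
    (hpne : ∃ R : Finset B, correctable Rᶜ)
    (h2 : 2 ≤ p) (hpd : p ≤ 2 * d - 2) :
    ∃ R₀ R₁ R₂ : Finset B,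
      Disjoint R₀ R₁ ∧ Disjoint R₀ R₂ ∧ Disjoint R₁ R₂ ∧
      R₀ ∪ R₁ ∪ R₂ = Finset.univ ∧
      correctable R₀ ∧ correctable R₁ ∧ correctable R₂ ∧
      R₁.Nonempty ∧ R₂.Nonempty ∧
      R₁.card ≤ d - 1 ∧ R₂.card ≤ d - 1 ∧
      (R₁ ∪ R₂).card = p ∧ R₀ = (R₁ ∪ R₂)ᶜ := by
  -- small sets are correctable
  have hsmall : ∀ S : Finset B, S.card < d → correctable S := by
    intro S hS
    by_contra hc
    have : d ≤ S.card := hd ▸ Nat.sInf_le ⟨S, rfl, hc⟩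
    omega
  -- p is attained
  have hpmem : p ∈ {k | ∃ R : Finset B, R.card = k ∧ correctable Rᶜ} := by
    rw [hp]
    exact Nat.sInf_mem (by obtain ⟨R, hR⟩ := hpne; exact ⟨R.card, R, rfl, hR⟩)
  obtain ⟨R, hcard, hRc⟩ := hpmem
  have hd2 : 2 ≤ d := by
    rcases Nat.lt_or_ge d 2 with h | h
    · omega
    · exact h
  -- split R
  obtain ⟨R₁, hR₁sub, hR₁card⟩ := Finset.exists_subset_card_eq (s := R) (n := p / 2) (by omega)
  refine ⟨Rᶜ, R₁, R \ R₁, ?_, ?_, ?_, ?_, ?_, ?_, ?_, ?_, ?_, ?_, ?_, ?_, ?_⟩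
  · exact Finset.disjoint_left.mpr fun a ha hb => by
      simp [Finset.mem_compl] at ha; exact ha (hR₁sub hb)
  · exact Finset.disjoint_left.mpr fun a ha hb => by
      simp [Finset.mem_compl] at ha; exact ha (Finset.mem_sdiff.mp hb).1
  · exact Finset.disjoint_sdiff
  · rw [Finset.union_assoc, Finset.union_sdiff_of_subset hR₁sub]
    ext a; simp [or_comm, em]
  · exact hRc
  · exact hsmall _ (by omega)
  · refine hsmall _ ?_
    have : (R \ R₁).card = p - p / 2 := by
      rw [Finset.card_sdiff_of_subset hR₁sub, hcard, hR₁card]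
    omega
  · rw [← Finset.card_pos, hR₁card]; omega
  · rw [← Finset.card_pos, Finset.card_sdiff_of_subset hR₁sub, hcard, hR₁card]; omega
  · omega
  · have : (R \ R₁).card = p - p / 2 := by
      rw [Finset.card_sdiff_of_subset hR₁sub, hcard, hR₁card]
    omega
  · rw [Finset.union_sdiff_of_subset hR₁sub]; exact hcard
  · rw [Finset.union_sdiff_of_subset hR₁sub]
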